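/- (Averaged Rademacher bound via square-root concavity) If the empirical Rademacher complexity satisfies R(M,S) ≤ (1/(2N)) Tr√(∑ₙ ρ(xₙ)²) with the xₙ drawn i.i.d. from a distribution p(x), then the expected Rademacher complexity satisfies E_S R(M,S) ≤ (1/(2√N)) Tr√(∫ p(x) ρ(x)² dx). -/

import Mathlib

open Matrix MeasureTheory
open scoped ComplexOrder

/-- The positive semidefinite square root of a positive semidefinite matrix, as defined in
Mathlib (Dec 2024) under the name `Matrix.PosSemidef.sqrt` (since removed). -/
noncomputable def Matrix.PosSemidef.sqrt {n : Type*} [Fintype n] [DecidableEq n]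
    {A : Matrix n n ℂ} (hA : A.PosSemidef) : Matrix n n ℂ :=
  hA.1.eigenvectorUnitary.1 * diagonal ((↑) ∘ (√·) ∘ hA.1.eigenvalues) *
  (star hA.1.eigenvectorUnitary : Matrix n n ℂ)

lemma Matrix.PosSemidef.posSemidef_sqrt {n : Type*} [Fintype n] [DecidableEq n]
    {A : Matrix n n ℂ} (hA : A.PosSemidef) : PosSemidef hA.sqrt := by
  unfold Matrix.PosSemidef.sqrt
  have h := (posSemidef_diagonal_iff (d := ((↑) ∘ (√·) ∘ hA.1.eigenvalues : n → ℂ))).mpr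
    (fun i => by
      simp only [Function.comp_apply]
      exact_mod_cast Real.sqrt_nonneg _)
  exact h.mul_mul_conjTranspose_same (hA.1.eigenvectorUnitary : Matrix n n ℂ)

/-- Positive semidefinite square root (for PSD inputs): `(AᴴA)^{1/4}`, which equals
`√A` whenever `A` is positive semidefinite. -/
noncomputable def msqrt {n : Type*} [Fintype n] [DecidableEq n]
    (A : Matrix n n ℂ) : Matrix n n ℂ :=
  (Matrix.PosSemidef.posSemidef_sqrt (Matrix.posSemidef_conjTranspose_mul_self A)).sqrt

section portsqrt
open scoped MatrixOrder

lemma Matrix.PosSemidef.sqrt_eq_cfc {n : Type*} [Fintype n] [DecidableEq n]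
    {A : Matrix n n ℂ} (hA : A.PosSemidef) : hA.sqrt = CFC.sqrt A := by
  rw [CFC.sqrt_eq_cfc, cfc_nnreal_eq_real _ A, hA.1.cfc_eq, Matrix.IsHermitian.cfc,
    Unitary.conjStarAlgAut_apply, Matrix.PosSemidef.sqrt]
  congr 3
  funext i
  simp [Real.coe_toNNReal', max_eq_left (hA.eigenvalues_nonneg i)]

lemma Matrix.PosSemidef.sqrt_mul_self {n : Type*} [Fintype n] [DecidableEq n]
    {A : Matrix n n ℂ} (hA : A.PosSemidef) : hA.sqrt * hA.sqrt = A := by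
  rw [hA.sqrt_eq_cfc]
  exact CFC.sqrt_mul_sqrt_self A hA.nonneg

lemma Matrix.PosSemidef.eq_sqrt_of_sq_eq {n : Type*} [Fintype n] [DecidableEq n]
    {A B : Matrix n n ℂ} (hB : B.PosSemidef) (hA : A.PosSemidef) (h : B ^ 2 = A) :
    B = hA.sqrt := by
  rw [hA.sqrt_eq_cfc]
  exact (CFC.sqrt_unique (by rw [← pow_two, h]) hB.nonneg).symm

lemma Matrix.posSemidef_iff_eq_transpose_mul_self {n : Type*} [Fintype n] [DecidableEq n]
    {A : Matrix n n ℂ} : A.PosSemidef ↔ ∃ B : Matrix n n ℂ, A = Bᴴ * B := by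
  constructor
  · intro h
    obtain ⟨B, hB⟩ := CStarAlgebra.nonneg_iff_eq_star_mul_self.mp h.nonneg
    exact ⟨B, hB⟩
  · rintro ⟨B, rfl⟩
    exact Matrix.posSemidef_conjTranspose_mul_self B

end portsqrt


section helperlemmas

section helpers
variable {d : ℕ}


-- L1a
lemma trace_ctms_re_nonneg (W : Matrix (Fin d) (Fin d) ℂ) :
    0 ≤ ((Wᴴ * W).trace).re := by
  have h : (Wᴴ * W).trace = ∑ i, ∑ k, star (W k i) * W k i := by
    simp [Matrix.trace, Matrix.diag, Matrix.mul_apply, Matrix.conjTranspose_apply]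
  rw [h]
  rw [Complex.re_sum]
  refine Finset.sum_nonneg fun i _ => ?_
  rw [Complex.re_sum]
  refine Finset.sum_nonneg fun k _ => ?_
  simp [Complex.mul_re]
  nlinarith [sq_nonneg ((W k i).re), sq_nonneg ((W k i).im)]

lemma psd_trace_re_nonneg {A : Matrix (Fin d) (Fin d) ℂ} (hA : A.PosSemidef) :
    0 ≤ (A.trace).re := by
  obtain ⟨B, rfl⟩ := Matrix.posSemidef_iff_eq_transpose_mul_self.mp hA
  exact trace_ctms_re_nonneg B

-- L1
lemma trace_am_gm (U V : Matrix (Fin d) (Fin d) ℂ) :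
    2 * ((Uᴴ * V).trace).re ≤ ((Uᴴ * U).trace).re + ((Vᴴ * V).trace).re := by
  have h0 := trace_ctms_re_nonneg (U - V)
  have hexp : (U - V)ᴴ * (U - V) = Uᴴ * U - Uᴴ * V - Vᴴ * U + Vᴴ * V := by
    rw [Matrix.conjTranspose_sub]; noncomm_ring
  rw [hexp] at h0
  have hsym : ((Vᴴ * U).trace).re = ((Uᴴ * V).trace).re := by
    have : (Vᴴ * U) = (Uᴴ * V)ᴴ := by simp
    rw [this, Matrix.trace_conjTranspose]
    simp
  simp only [Matrix.trace_add, Matrix.trace_sub, Complex.add_re, Complex.sub_re] at h0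
  linarith


-- L2
lemma trace_sqrt_le_variational {Y Z : Matrix (Fin d) (Fin d) ℂ}
    (hY : Y.PosSemidef) (hZ : Z.PosSemidef) (hdet : IsUnit Z.det) :
    2 * ((hY.sqrt.trace).re) ≤ (Z.trace).re + ((Y * Z⁻¹).trace).re := by
  have hBps : hZ.sqrt.PosSemidef := hZ.posSemidef_sqrt
  generalize hA' : hY.sqrt = A at *
  generalize hB' : hZ.sqrt = B at *
  have hBH : Bᴴ = B := hBps.1
  have hAH : Aᴴ = A := by rw [← hA']; exact hY.posSemidef_sqrt.1
  have hAA : A * A = Y := by rw [← hA']; exact hY.sqrt_mul_self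
  have hBB : B * B = Z := by rw [← hB']; exact hZ.sqrt_mul_self
  have hBdet : IsUnit B.det := by
    have h2 : B.det * B.det = Z.det := by rw [← Matrix.det_mul, hBB]
    exact isUnit_of_mul_isUnit_left (h2 ▸ hdet)
  have hBinv : B * B⁻¹ = 1 := Matrix.mul_nonsing_inv B hBdet
  have hBinvH : (B⁻¹)ᴴ = B⁻¹ := by
    rw [Matrix.conjTranspose_nonsing_inv, hBH]
  have hZinv : Z⁻¹ = B⁻¹ * B⁻¹ := by rw [← hBB, Matrix.mul_inv_rev]
  have h := trace_am_gm B (B⁻¹ * A)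
  have e1 : Bᴴ * (B⁻¹ * A) = A := by rw [hBH, ← Matrix.mul_assoc, hBinv, Matrix.one_mul]
  have e2 : Bᴴ * B = Z := by rw [hBH, hBB]
  have e3 : ((B⁻¹ * A)ᴴ * (B⁻¹ * A)).trace = (Y * Z⁻¹).trace := by
    rw [Matrix.conjTranspose_mul, hAH, hBinvH]
    calc (A * B⁻¹ * (B⁻¹ * A)).trace
        = ((B⁻¹ * A) * (A * B⁻¹)).trace := Matrix.trace_mul_comm _ _
      _ = ((B⁻¹ * (A * A)) * B⁻¹).trace := by rw [Matrix.mul_assoc, Matrix.mul_assoc,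
            Matrix.mul_assoc]
      _ = (B⁻¹ * ((A * A) * B⁻¹)).trace := by rw [Matrix.mul_assoc]
      _ = (((A * A) * B⁻¹) * B⁻¹).trace := Matrix.trace_mul_comm _ _
      _ = (Y * Z⁻¹).trace := by rw [Matrix.mul_assoc, hAA, ← hZinv]
  rw [e1, e2, e3] at h
  exact h


section spectral
variable {M : Matrix (Fin d) (Fin d) ℂ} (hM : M.PosSemidef)

lemma trace_unitary_conj_diag (U : Matrix.unitaryGroup (Fin d) ℂ) (f : Fin d → ℂ) :
    ((U : Matrix (Fin d) (Fin d) ℂ) * diagonal f * (star U : Matrix (Fin d) (Fin d) ℂ)).trace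
      = ∑ i, f i := by
  rw [Matrix.trace_mul_cycle]
  rw [show (star U : Matrix (Fin d) (Fin d) ℂ) * (U : Matrix (Fin d) (Fin d) ℂ) = 1 from
    Matrix.UnitaryGroup.star_mul_self U]
  rw [Matrix.one_mul, Matrix.trace_diagonal]

lemma trace_sqrt_re : (hM.sqrt.trace).re = ∑ i, Real.sqrt (hM.1.eigenvalues i) := by
  rw [Matrix.PosSemidef.sqrt]
  rw [trace_unitary_conj_diag]
  rw [Complex.re_sum]
  simp [Function.comp]

lemma star_mul_one_self (U : Matrix.unitaryGroup (Fin d) ℂ) :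
    (U : Matrix (Fin d) (Fin d) ℂ) * (star U : Matrix (Fin d) (Fin d) ℂ) = 1 :=
  (Matrix.mem_unitaryGroup_iff).mp U.2

lemma shifted_sqrt (a ε : ℝ) (ha : 0 ≤ a) (hε : 0 < ε)
    {P : Matrix (Fin d) (Fin d) ℂ} (hP : P.PosSemidef)
    (hPM : P = (a : ℂ) • M + (ε : ℂ) • 1) :
    IsUnit hP.sqrt.det ∧
      ((hP.sqrt.trace).re = ∑ i, Real.sqrt (a * hM.1.eigenvalues i + ε)) := by
  classical
  set U := hM.1.eigenvectorUnitary with hU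
  set lam := hM.1.eigenvalues with hlam
  have hlam0 : ∀ i, 0 ≤ lam i := hM.eigenvalues_nonneg
  have hpos : ∀ i, 0 < a * lam i + ε := fun i => by nlinarith [hlam0 i]
  set g : Fin d → ℂ := fun i => (Real.sqrt (a * lam i + ε) : ℂ) with hg
  set Q : Matrix (Fin d) (Fin d) ℂ :=
    (U : Matrix (Fin d) (Fin d) ℂ) * diagonal g * (star U : Matrix (Fin d) (Fin d) ℂ) with hQ
  have hgnn : (0 : Fin d → ℂ) ≤ g := by
    intro i
    simpa [hg] using Complex.zero_le_real.mpr (Real.sqrt_nonneg _)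
  have hdiagPSD : (diagonal g).PosSemidef := .diagonal hgnn
  have hQpsd : Q.PosSemidef := by
    have := hdiagPSD.mul_mul_conjTranspose_same (U : Matrix (Fin d) (Fin d) ℂ)
    simpa [hQ, Matrix.star_eq_conjTranspose] using this
  have hUU : (star U : Matrix (Fin d) (Fin d) ℂ) * (U : Matrix (Fin d) (Fin d) ℂ) = 1 :=
    Matrix.UnitaryGroup.star_mul_self U
  have hUU' : (U : Matrix (Fin d) (Fin d) ℂ) * (star U : Matrix (Fin d) (Fin d) ℂ) = 1 :=
    star_mul_one_self U
  have hQsq : Q * Q = P := by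
    have hfun : (fun i => g i * g i) = fun i => ((a * lam i + ε : ℝ) : ℂ) := by
      funext i
      rw [hg]
      rw [← Complex.ofReal_mul, Real.mul_self_sqrt (hpos i).le]
    have hgg : diagonal g * diagonal g = diagonal (fun i => ((a * lam i + ε : ℝ) : ℂ)) := by
      rw [Matrix.diagonal_mul_diagonal, hfun]
    have hsplit : diagonal (fun i => ((a * lam i + ε : ℝ) : ℂ))
        = (a : ℂ) • diagonal (RCLike.ofReal ∘ lam) + (ε : ℂ) • 1 := by
      ext i j
      rcases eq_or_ne i j with rfl | hij
      · simp [Matrix.one_apply_eq]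
      · simp [Matrix.diagonal_apply_ne _ hij, Matrix.one_apply_ne hij]
    calc Q * Q
        = (U : Matrix (Fin d) (Fin d) ℂ) * (diagonal g *
            ((star U : Matrix (Fin d) (Fin d) ℂ) * (U : Matrix (Fin d) (Fin d) ℂ)) * diagonal g) *
            (star U : Matrix (Fin d) (Fin d) ℂ) := by
          rw [hQ]; simp only [Matrix.mul_assoc]
      _ = (U : Matrix (Fin d) (Fin d) ℂ) * diagonal (fun i => ((a * lam i + ε : ℝ) : ℂ)) *
            (star U : Matrix (Fin d) (Fin d) ℂ) := by
          rw [hUU, Matrix.mul_one, hgg]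
      _ = P := by
          rw [hsplit, Matrix.mul_add, Matrix.add_mul, Matrix.mul_smul, Matrix.smul_mul,
            Matrix.mul_smul, Matrix.smul_mul, Matrix.mul_one, hUU', hPM]
          congr 2
          rw [hU, hlam]
          exact (by simpa using hM.1.spectral_theorem.symm)
  have hQeq : Q = hP.sqrt := hQpsd.eq_sqrt_of_sq_eq hP (by rw [pow_two, hQsq])
  constructor
  · rw [← hQeq, hQ]
    rw [Matrix.det_mul, Matrix.det_mul, Matrix.det_diagonal]
    have hdU : (U : Matrix (Fin d) (Fin d) ℂ).det *
        (star U : Matrix (Fin d) (Fin d) ℂ).det = 1 := by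
      rw [← Matrix.det_mul, hUU', Matrix.det_one]
    rw [isUnit_iff_ne_zero]
    intro hzero
    have h2 : ((U : Matrix (Fin d) (Fin d) ℂ).det * (star U : Matrix (Fin d) (Fin d) ℂ).det)
        * ∏ i, g i = 0 := by linear_combination hzero
    rw [hdU, one_mul] at h2
    obtain ⟨i, _, hi⟩ := Finset.prod_eq_zero_iff.mp h2
    have hi' : ((Real.sqrt (a * lam i + ε) : ℝ) : ℂ) = 0 := hi
    have hi'' : Real.sqrt (a * lam i + ε) = 0 := by exact_mod_cast hi'
    exact (Real.sqrt_ne_zero'.mpr (hpos i)) hi''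
  · rw [← hQeq, hQ, trace_unitary_conj_diag, Complex.re_sum]
    simp [hg]
end spectral



-- L5
lemma msqrt_eq_sqrt {A : Matrix (Fin d) (Fin d) ℂ} (hA : A.PosSemidef) :
    msqrt A = hA.sqrt := by
  have key : ∀ (B : Matrix (Fin d) (Fin d) ℂ) (hB : B.PosSemidef), B = A → hB.sqrt = hA.sqrt := by
    rintro B hB rfl; rfl
  have h1 : (Matrix.posSemidef_conjTranspose_mul_self A).sqrt = A := by
    refine (hA.eq_sqrt_of_sq_eq _ ?_).symm
    rw [pow_two, hA.1]
  exact key _ _ h1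

lemma ctms_diag_re (B : Matrix (Fin d) (Fin d) ℂ) (i : Fin d) :
    ((Bᴴ * B) i i).re = ∑ k, Complex.normSq (B k i) := by
  have h : (Bᴴ * B) i i = ∑ k, star (B k i) * B k i := by
    simp [Matrix.mul_apply, Matrix.conjTranspose_apply]
  rw [h, Complex.re_sum]
  exact Finset.sum_congr rfl fun k _ => by
    simp [Complex.mul_re, Complex.normSq_apply]

lemma psd_entry_abs_le {A : Matrix (Fin d) (Fin d) ℂ} (hA : A.PosSemidef)
    (hdiag : ∀ i, (A i i).re ≤ 1) (i j : Fin d) : ‖A i j‖ ≤ 1 := by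
  obtain ⟨B, rfl⟩ := Matrix.posSemidef_iff_eq_transpose_mul_self.mp hA
  have h : (Bᴴ * B) i j = ∑ k, star (B k i) * B k j := by
    simp [Matrix.mul_apply, Matrix.conjTranspose_apply]
  rw [h]
  have step1 : ‖∑ k, star (B k i) * B k j‖
      ≤ ∑ k, ‖B k i‖ * ‖B k j‖ := by
    refine le_trans (norm_sum_le _ _) ?_
    refine le_of_eq (Finset.sum_congr rfl fun k _ => ?_)
    rw [norm_mul]
    simp
  refine le_trans step1 ?_
  have hcs := Finset.sum_mul_sq_le_sq_mul_sq Finset.univ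
    (fun k => ‖B k i‖) (fun k => ‖B k j‖)
  have hi2 : ∑ k, ‖B k i‖ ^ 2 ≤ 1 := by
    have := hdiag i
    rw [ctms_diag_re] at this
    refine le_trans (le_of_eq ?_) this
    exact Finset.sum_congr rfl fun k _ => Complex.sq_norm _
  have hj2 : ∑ k, ‖B k j‖ ^ 2 ≤ 1 := by
    have := hdiag j
    rw [ctms_diag_re] at this
    refine le_trans (le_of_eq ?_) this
    exact Finset.sum_congr rfl fun k _ => Complex.sq_norm _
  have hnn : 0 ≤ ∑ k, ‖B k i‖ * ‖B k j‖ :=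
    Finset.sum_nonneg fun k _ => mul_nonneg (norm_nonneg _) (norm_nonneg _)
  have h2 : (∑ k, ‖B k i‖ * ‖B k j‖) ^ 2 ≤ 1 := by
    refine le_trans hcs ?_
    have h1' : (0:ℝ) ≤ ∑ k, ‖B k j‖ ^ 2 := Finset.sum_nonneg fun k _ => sq_nonneg _
    nlinarith
  nlinarith

section more
variable {d : ℕ}

lemma psd_diag_re_nonneg {A : Matrix (Fin d) (Fin d) ℂ} (hA : A.PosSemidef) (i : Fin d) :
    0 ≤ (A i i).re := by
  obtain ⟨B, rfl⟩ := Matrix.posSemidef_iff_eq_transpose_mul_self.mp hA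
  rw [ctms_diag_re]
  exact Finset.sum_nonneg fun k _ => Complex.normSq_nonneg _

lemma psd_sum {N : ℕ} (g : Fin N → Matrix (Fin d) (Fin d) ℂ)
    (h : ∀ n, (g n).PosSemidef) : (∑ n, g n).PosSemidef := by
  classical
  exact Finset.sum_induction _ _ (fun a b ha hb => ha.add hb) Matrix.PosSemidef.zero
    (fun n _ => h n)

lemma sqrt_add_le {a b : ℝ} (ha : 0 ≤ a) (hb : 0 ≤ b) :
    Real.sqrt (a + b) ≤ Real.sqrt a + Real.sqrt b := by
  have h1 : a + b ≤ (Real.sqrt a + Real.sqrt b) ^ 2 := by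
    nlinarith [Real.sq_sqrt ha, Real.sq_sqrt hb, Real.sqrt_nonneg a, Real.sqrt_nonneg b]
  calc Real.sqrt (a + b) ≤ Real.sqrt ((Real.sqrt a + Real.sqrt b) ^ 2) := Real.sqrt_le_sqrt h1
    _ = Real.sqrt a + Real.sqrt b := Real.sqrt_sq (by positivity)
end more

end helpers

section mhelpers
variable {X : Type*} [MeasurableSpace X] {d N : ℕ}
variable (μ : Measure X) [IsProbabilityMeasure μ]



-- L7a : marginal of product measure
lemma pi_map_eval (n : Fin N) :
    (Measure.pi fun _ : Fin N => μ).map (fun xs => xs n) = μ := by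
  apply Measure.ext
  intro s hs
  rw [Measure.map_apply (measurable_pi_apply n) hs]
  have hpre : (fun xs : Fin N → X => xs n) ⁻¹' s
      = Set.univ.pi (Function.update (fun _ : Fin N => Set.univ) n s) := by
    ext xs
    simp [Function.update_apply]
  rw [hpre, Measure.pi_pi]
  rw [Fintype.prod_eq_single n (fun i hi => by simp [Function.update_apply, hi])]
  simp

-- L7b
lemma integral_eval {g : X → ℂ} (hg : Measurable g) (n : Fin N) :
    ∫ xs, g (xs n) ∂(Measure.pi fun _ : Fin N => μ) = ∫ x, g x ∂μ := by
  rw [← pi_map_eval μ n]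
  rw [integral_map (measurable_pi_apply n).aemeasurable]
  rw [pi_map_eval μ n]
  exact hg.aestronglyMeasurable

-- bounded measurable complex functions are integrable
lemma integrable_of_bound {α : Type*} [MeasurableSpace α] (ν : Measure α)
    [IsProbabilityMeasure ν] {g : α → ℂ} (hg : Measurable g) (C : ℝ)
    (hC : ∀ a, ‖g a‖ ≤ C) : Integrable g ν := by
  refine Integrable.mono' (integrable_const C) hg.aestronglyMeasurable ?_
  filter_upwards with a
  simpa using hC a



lemma trace_mul_eq (A C : Matrix (Fin d) (Fin d) ℂ) :
    (A * C).trace = ∑ i, ∑ j, A i j * C j i := by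
  simp [Matrix.trace, Matrix.diag, Matrix.mul_apply]

-- c ≥ 0 real scalar smul preserves PSD
lemma psd_smul {A : Matrix (Fin d) (Fin d) ℂ} (hA : A.PosSemidef) {c : ℝ} (hc : 0 ≤ c) :
    ((c : ℂ) • A).PosSemidef := by
  refine .of_dotProduct_mulVec_nonneg ?_ ?_
  · unfold Matrix.IsHermitian
    rw [Matrix.conjTranspose_smul, hA.1]
    congr 1
    simp [Complex.ext_iff]
  · intro v
    rw [Matrix.smul_mulVec, dotProduct_smul]
    exact smul_nonneg (Complex.zero_le_real.mpr hc) (hA.dotProduct_mulVec_nonneg v)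

section integralmatrix
variable {f : X → Matrix (Fin d) (Fin d) ℂ}

lemma trace_integral_matrix (hfint : ∀ i j, Integrable (fun x => f x i j) μ)
    (C : Matrix (Fin d) (Fin d) ℂ) :
    ((Matrix.of fun i j => ∫ x, f x i j ∂μ) * C).trace = ∫ x, ((f x) * C).trace ∂μ := by
  rw [trace_mul_eq]
  have : ∀ x, ((f x) * C).trace = ∑ i, ∑ j, f x i j * C j i := fun x => trace_mul_eq _ _
  simp_rw [this]
  rw [integral_finset_sum _ (fun i _ => integrable_finset_sum _
    (fun j _ => (hfint i j).mul_const _))]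
  refine Finset.sum_congr rfl fun i _ => ?_
  rw [integral_finset_sum _ (fun j _ => (hfint i j).mul_const _)]
  refine Finset.sum_congr rfl fun j _ => ?_
  rw [integral_mul_const]
  rfl

lemma dotProduct_integral_matrix (hfint : ∀ i j, Integrable (fun x => f x i j) μ)
    (v : Fin d → ℂ) :
    dotProduct (star v) ((Matrix.of fun i j => ∫ x, f x i j ∂μ) *ᵥ v)
      = ∫ x, dotProduct (star v) ((f x) *ᵥ v) ∂μ := by
  have expand : ∀ (A : Matrix (Fin d) (Fin d) ℂ),
      dotProduct (star v) (A *ᵥ v) = ∑ i, ∑ j, star (v i) * (A i j * v j) := by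
    intro A
    simp [dotProduct, Matrix.mulVec, Finset.mul_sum, Pi.star_apply]
  simp_rw [expand]
  rw [integral_finset_sum _ (fun i _ => integrable_finset_sum _
    (fun j _ => (((hfint i j).mul_const _).const_mul _)))]
  refine Finset.sum_congr rfl fun i _ => ?_
  rw [integral_finset_sum _ (fun j _ => ((hfint i j).mul_const _).const_mul _)]
  refine Finset.sum_congr rfl fun j _ => ?_
  rw [integral_const_mul, integral_mul_const]
  rfl

lemma integral_matrix_posSemidef (hfint : ∀ i j, Integrable (fun x => f x i j) μ)
    (hfPSD : ∀ x, (f x).PosSemidef) :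
    (Matrix.of fun i j => ∫ x, f x i j ∂μ).PosSemidef := by
  refine .of_dotProduct_mulVec_nonneg ?_ ?_
  · unfold Matrix.IsHermitian
    ext i j
    rw [Matrix.conjTranspose_apply, Matrix.of_apply, Matrix.of_apply]
    rw [show ∀ z : ℂ, star z = starRingEnd ℂ z from fun _ => rfl]
    rw [← integral_conj]
    refine integral_congr_ae (Filter.Eventually.of_forall fun x => ?_)
    have h1 : (f x)ᴴ i j = f x i j := by rw [(hfPSD x).1]
    simpa [Matrix.conjTranspose_apply] using h1
  · intro v
    rw [dotProduct_integral_matrix μ hfint v]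
    set q : X → ℂ := fun x => dotProduct (star v) ((f x) *ᵥ v) with hqdef
    have hq0 : ∀ x, 0 ≤ q x := fun x => (hfPSD x).dotProduct_mulVec_nonneg v
    have hq : ∀ x, q x = ((q x).re : ℂ) := by
      intro x
      have := (Complex.le_def.mp (hq0 x))
      apply Complex.ext
      · simp
      · simp [← this.2]
    calc (0:ℂ) = ((0:ℝ) : ℂ) := by norm_num
      _ ≤ ((∫ x, (q x).re ∂μ : ℝ) : ℂ) := by
          rw [Complex.real_le_real]
          exact integral_nonneg fun x => (Complex.le_def.mp (hq0 x)).1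
      _ = ∫ x, ((q x).re : ℂ) ∂μ := integral_ofReal.symm
      _ = ∫ x, q x ∂μ :=
          integral_congr_ae (Filter.Eventually.of_forall fun x => (hq x).symm)
end integralmatrix
end mhelpers

end helperlemmas

/-- Averaged Rademacher bound via operator concavity of the square root: if the
empirical Rademacher complexity satisfies `R(S) ≤ (1/(2N)) Tr √(∑ₙ ρ(xₙ)²)` for every
sample `S = (x₁,…,x_N)`, and the `xₙ` are drawn i.i.d. from a probability measure `μ`,
then `E_S R(S) ≤ (1/(2√N)) Tr √(∫ ρ(x)² dμ(x))`. -/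
theorem averaged_rademacher_bound {X : Type*} [MeasurableSpace X]
    {d N : ℕ} (hN : 0 < N)
    (μ : Measure X) [IsProbabilityMeasure μ]
    (ρ : X → Matrix (Fin d) (Fin d) ℂ)
    (hmeas : ∀ i j, Measurable fun x => ρ x i j)
    (hρ : ∀ x, (ρ x).PosSemidef) (htr : ∀ x, (ρ x).trace = 1)
    (R : (Fin N → X) → ℝ)
    (hRint : Integrable R (Measure.pi fun _ : Fin N => μ))
    (hR : ∀ xs : Fin N → X,
      R xs ≤ (1 / (2 * N) : ℝ) * ((msqrt (∑ n, ρ (xs n) * ρ (xs n))).trace).re) :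
    (∫ xs, R xs ∂(Measure.pi fun _ : Fin N => μ))
      ≤ (1 / (2 * Real.sqrt N)) *
          ((msqrt (Matrix.of fun i j => ∫ x, (ρ x * ρ x) i j ∂μ)).trace).re := by
  classical
  have hNR : (0:ℝ) < N := by exact_mod_cast hN
  have hsN : (0:ℝ) < Real.sqrt N := Real.sqrt_pos.mpr hNR
  -- basic facts about ρ
  have hfPSD : ∀ x, (ρ x * ρ x).PosSemidef := fun x => by
    rw [← pow_two]; exact (hρ x).pow 2
  have hfmeas : ∀ i j, Measurable fun x => (ρ x * ρ x) i j := by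
    intro i j
    have h : (fun x => (ρ x * ρ x) i j) = fun x => ∑ k, ρ x i k * ρ x k j := by
      funext x; simp [Matrix.mul_apply]
    rw [h]
    exact Finset.measurable_sum _ fun k _ => (hmeas i k).mul (hmeas k j)
  have hdiag_le_one : ∀ x i, (ρ x i i).re ≤ 1 := by
    intro x i
    have h1 : ∑ k, (ρ x k k).re = 1 := by
      have := htr x
      rw [Matrix.trace] at this
      have h2 := congrArg Complex.re this
      rw [Complex.re_sum] at h2
      simpa [Matrix.diag] using h2
    rw [← h1]
    exact Finset.single_le_sum (fun k _ => psd_diag_re_nonneg (hρ x) k) (Finset.mem_univ i)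
  have hentry : ∀ x i j, ‖ρ x i j‖ ≤ 1 := fun x =>
    psd_entry_abs_le (hρ x) (hdiag_le_one x)
  have hfbound : ∀ x i j, ‖(ρ x * ρ x) i j‖ ≤ d := by
    intro x i j
    have h : (ρ x * ρ x) i j = ∑ k, ρ x i k * ρ x k j := by simp [Matrix.mul_apply]
    rw [h]
    calc ‖∑ k, ρ x i k * ρ x k j‖
        ≤ ∑ k, ‖ρ x i k * ρ x k j‖ := norm_sum_le _ _
      _ ≤ ∑ _k : Fin d, (1:ℝ) := by
          refine Finset.sum_le_sum fun k _ => ?_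
          rw [norm_mul]
          exact mul_le_one₀ (hentry x i k) (norm_nonneg _) (hentry x k j)
      _ = d := by simp
  have hfint : ∀ i j, Integrable (fun x => (ρ x * ρ x) i j) μ := fun i j =>
    integrable_of_bound μ (hfmeas i j) d (fun x => hfbound x i j)
  -- the integral matrix
  set M : Matrix (Fin d) (Fin d) ℂ := Matrix.of fun i j => ∫ x, (ρ x * ρ x) i j ∂μ with hMdef
  have hMps : M.PosSemidef := integral_matrix_posSemidef μ hfint hfPSD
  rw [msqrt_eq_sqrt hMps, trace_sqrt_re hMps]
  set T : ℝ := ∑ i, Real.sqrt (hMps.1.eigenvalues i) with hTdef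
  have hTnn : 0 ≤ T := Finset.sum_nonneg fun i _ => Real.sqrt_nonneg _
  set pm := (Measure.pi fun _ : Fin N => μ) with hpm
  haveI : IsProbabilityMeasure pm := by rw [hpm]; infer_instance
  -- reduce to the ε-approximate bound
  suffices key : ∀ ε : ℝ, 0 < ε →
      (∫ xs, R xs ∂pm) ≤ 1/(2*Real.sqrt N) * T + (d:ℝ) * Real.sqrt ε / (2*N) by
    have goal' : (∫ xs, R xs ∂pm) ≤ 1/(2*Real.sqrt N) * T := by
      refine le_of_forall_pos_le_add fun δ hδ => ?_
      have hε : (0:ℝ) < (2*N*δ/(d+1))^2 := by positivity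
      refine (key _ hε).trans ?_
      have hs : Real.sqrt ((2*N*δ/(d+1))^2) = 2*N*δ/(d+1) := Real.sqrt_sq (by positivity)
      rw [hs]
      have harith : (d:ℝ) * (2*N*δ/(d+1)) / (2*N) = δ * ((d:ℝ)/(d+1)) := by
        field_simp
      rw [harith]
      have : δ * ((d:ℝ)/(d+1)) ≤ δ := by
        have hd1 : (d:ℝ)/(d+1) ≤ 1 := by
          rw [div_le_one (by positivity)]
          linarith
        nlinarith
      linarith
    calc (∫ xs, R xs ∂pm) ≤ 1/(2*Real.sqrt N) * T := goal'
      _ = 1/(2*Real.sqrt N) * T := rfl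
  intro ε hε
  -- the regularized matrix and its square root
  set P : Matrix (Fin d) (Fin d) ℂ :=
    ((N:ℝ):ℂ) • M + ((ε:ℝ):ℂ) • (1 : Matrix (Fin d) (Fin d) ℂ) with hPdef
  have hPps : P.PosSemidef :=
    (psd_smul hMps (Nat.cast_nonneg N)).add (psd_smul Matrix.PosSemidef.one hε.le)
  obtain ⟨hdet, htrZ⟩ := shifted_sqrt hMps (N:ℝ) ε (Nat.cast_nonneg N) hε hPps rfl
  set Z := hPps.sqrt with hZdef
  have hZps : Z.PosSemidef := hPps.posSemidef_sqrt
  have hZZ : Z * Z = P := hPps.sqrt_mul_self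
  -- PSD of the sums
  have hYps : ∀ xs : Fin N → X, (∑ n, ρ (xs n) * ρ (xs n)).PosSemidef := fun xs =>
    psd_sum _ (fun n => hfPSD (xs n))
  -- pointwise bound
  have hpt : ∀ xs : Fin N → X, R xs ≤ (1/(2*(N:ℝ))) *
      (2⁻¹ * (Z.trace.re + (((∑ n, ρ (xs n) * ρ (xs n)) * Z⁻¹).trace).re)) := by
    intro xs
    refine (hR xs).trans ?_
    rw [msqrt_eq_sqrt (hYps xs)]
    have h2 := trace_sqrt_le_variational (hYps xs) hZps hdet
    have hc : (0:ℝ) ≤ 1/(2*(N:ℝ)) := by positivity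
    have h3 : (((hYps xs).sqrt.trace).re) ≤
        2⁻¹ * (Z.trace.re + (((∑ n, ρ (xs n) * ρ (xs n)) * Z⁻¹).trace).re) := by
      linarith
    exact mul_le_mul_of_nonneg_left h3 hc
  -- integrability machinery for the trace functional
  set C := Z⁻¹ with hCdef
  have hgZmeas : Measurable (fun x => ((ρ x * ρ x) * C).trace) := by
    have h : (fun x => ((ρ x * ρ x) * C).trace)
        = fun x => ∑ i, ∑ j, (ρ x * ρ x) i j * C j i := by
      funext x; rw [trace_mul_eq]
    rw [h]
    exact Finset.measurable_sum _ fun i _ => Finset.measurable_sum _ fun j _ =>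
      (hfmeas i j).mul_const _
  set CZ : ℝ := ∑ i : Fin d, ∑ j : Fin d, (d:ℝ) * ‖C j i‖ with hCZ
  have hgZbound : ∀ x, ‖((ρ x * ρ x) * C).trace‖ ≤ CZ := by
    intro x
    rw [trace_mul_eq]
    calc ‖∑ i, ∑ j, (ρ x * ρ x) i j * C j i‖
        ≤ ∑ i, ‖∑ j, (ρ x * ρ x) i j * C j i‖ := norm_sum_le _ _
      _ ≤ ∑ i, ∑ j, ‖(ρ x * ρ x) i j * C j i‖ :=
          Finset.sum_le_sum fun i _ => norm_sum_le _ _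
      _ ≤ CZ := by
          rw [hCZ]
          refine Finset.sum_le_sum fun i _ => Finset.sum_le_sum fun j _ => ?_
          rw [norm_mul]
          exact mul_le_mul_of_nonneg_right (hfbound x i j) (norm_nonneg _)
  have hGn_int : ∀ n : Fin N,
      Integrable (fun xs : Fin N → X => ((ρ (xs n) * ρ (xs n)) * C).trace) pm :=
    fun n => integrable_of_bound pm (hgZmeas.comp (measurable_pi_apply n)) CZ
      (fun xs => hgZbound _)
  have hsum_eq : ∀ xs : Fin N → X, ((∑ n, ρ (xs n) * ρ (xs n)) * C).trace
      = ∑ n, ((ρ (xs n) * ρ (xs n)) * C).trace := by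
    intro xs; rw [Matrix.sum_mul, Matrix.trace_sum]
  have hGint : Integrable
      (fun xs : Fin N → X => ((∑ n, ρ (xs n) * ρ (xs n)) * C).trace) pm := by
    have h : (fun xs : Fin N → X => ((∑ n, ρ (xs n) * ρ (xs n)) * C).trace)
        = fun xs => ∑ n, ((ρ (xs n) * ρ (xs n)) * C).trace := funext hsum_eq
    rw [h]
    exact integrable_finset_sum _ fun n _ => hGn_int n
  have hEG : ∫ xs, ((∑ n, ρ (xs n) * ρ (xs n)) * C).trace ∂pm
      = (N:ℂ) * ((M * C).trace) := by
    simp_rw [hsum_eq]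
    rw [integral_finset_sum _ fun n _ => hGn_int n]
    have h1 : ∀ n : Fin N, ∫ xs, ((ρ (xs n) * ρ (xs n)) * C).trace ∂pm = (M * C).trace := by
      intro n
      rw [hpm]
      rw [integral_eval μ hgZmeas n]
      rw [hMdef, trace_integral_matrix μ hfint C]
    simp_rw [h1]
    rw [Finset.sum_const, Finset.card_univ, Fintype.card_fin, nsmul_eq_mul]
  have hGreint : Integrable
      (fun xs : Fin N → X => (((∑ n, ρ (xs n) * ρ (xs n)) * C).trace).re) pm := hGint.re
  have hhint : Integrable (fun xs : Fin N → X => (1/(2*(N:ℝ))) *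
      (2⁻¹ * (Z.trace.re + (((∑ n, ρ (xs n) * ρ (xs n)) * C).trace).re))) pm :=
    (((integrable_const _).add hGreint).const_mul _).const_mul _
  have hmono := integral_mono hRint hhint hpt
  refine hmono.trans ?_
  have hcomp : ∫ xs, (1/(2*(N:ℝ))) *
      (2⁻¹ * (Z.trace.re + (((∑ n, ρ (xs n) * ρ (xs n)) * C).trace).re)) ∂pm
      = (1/(2*(N:ℝ))) * (2⁻¹ * (Z.trace.re + ((N:ℂ) * ((M * C).trace)).re)) := by
    rw [integral_const_mul, integral_const_mul]
    congr 2
    rw [integral_add (integrable_const _) hGreint, integral_const, probReal_univ]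
    simp only [ENNReal.toReal_one, smul_eq_mul, one_mul]
    congr 1
    have h6 := integral_re (𝕜 := ℂ) hGint
    simp only [RCLike.re_to_complex] at h6
    rw [h6, hEG]
  rw [hcomp]
  have htrace_eq : ((N:ℂ) * ((M * C).trace)).re = Z.trace.re - ε * (Z⁻¹).trace.re := by
    have hMC : ((N:ℝ):ℂ) • M = P - ((ε:ℝ):ℂ) • (1:Matrix (Fin d) (Fin d) ℂ) := by
      rw [hPdef]; rw [add_sub_cancel_right]
    have h1 : (N:ℂ) * ((M * C).trace) = ((((N:ℝ):ℂ) • M) * C).trace := by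
      rw [Matrix.smul_mul, Matrix.trace_smul, smul_eq_mul]
      norm_cast
    rw [h1, hMC, Matrix.sub_mul, Matrix.trace_sub]
    have hPZ : P * C = Z := by
      rw [hCdef, ← hZZ, Matrix.mul_assoc, Matrix.mul_nonsing_inv _ hdet, Matrix.mul_one]
    rw [hPZ, Matrix.smul_mul, Matrix.trace_smul]
    rw [Complex.sub_re]
    congr 1
    rw [smul_eq_mul, Complex.re_ofReal_mul, Matrix.one_mul, hCdef]
  have hZinv_nn : 0 ≤ (Z⁻¹).trace.re := psd_trace_re_nonneg hZps.inv
  have hfac : ((N:ℂ) * ((M * C).trace)).re ≤ Z.trace.re := by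
    rw [htrace_eq]; nlinarith
  have hlam0 := hMps.eigenvalues_nonneg
  have hZbound : Z.trace.re ≤ Real.sqrt N * T + (d:ℝ) * Real.sqrt ε := by
    rw [htrZ]
    calc ∑ i, Real.sqrt ((N:ℝ) * hMps.1.eigenvalues i + ε)
        ≤ ∑ i, (Real.sqrt N * Real.sqrt (hMps.1.eigenvalues i) + Real.sqrt ε) := by
          refine Finset.sum_le_sum fun i _ => ?_
          have h4 := sqrt_add_le (mul_nonneg (Nat.cast_nonneg N) (hlam0 i)) hε.le
          rwa [Real.sqrt_mul (Nat.cast_nonneg N)] at h4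
      _ = Real.sqrt N * T + (d:ℝ) * Real.sqrt ε := by
          rw [Finset.sum_add_distrib, ← Finset.mul_sum, Finset.sum_const, Finset.card_univ,
            Fintype.card_fin, nsmul_eq_mul, hTdef]
  have hsq : Real.sqrt N * Real.sqrt N = (N:ℝ) := Real.mul_self_sqrt (Nat.cast_nonneg N)
  calc (1/(2*(N:ℝ))) * (2⁻¹ * (Z.trace.re + ((N:ℂ) * ((M * C).trace)).re))
      ≤ (1/(2*(N:ℝ))) * (2⁻¹ * (Z.trace.re + Z.trace.re)) := by
        have hc : (0:ℝ) ≤ 1/(2*(N:ℝ)) := by positivity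
        have : 2⁻¹ * (Z.trace.re + ((N:ℂ) * ((M * C).trace)).re)
            ≤ 2⁻¹ * (Z.trace.re + Z.trace.re) := by nlinarith
        exact mul_le_mul_of_nonneg_left this hc
    _ = (1/(2*(N:ℝ))) * Z.trace.re := by ring
    _ ≤ (1/(2*(N:ℝ))) * (Real.sqrt N * T + (d:ℝ) * Real.sqrt ε) := by
        have hc : (0:ℝ) ≤ 1/(2*(N:ℝ)) := by positivity
        exact mul_le_mul_of_nonneg_left hZbound hc
    _ = 1/(2*Real.sqrt N) * T + (d:ℝ) * Real.sqrt ε / (2*N) := by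
        have h5 : (1/(2*(N:ℝ))) * (Real.sqrt N * T) = 1/(2*Real.sqrt N) * T := by
          rw [div_mul_eq_mul_div, one_mul, div_mul_eq_mul_div, one_mul,
            div_eq_div_iff (by positivity) (by positivity)]
          linear_combination 2 * T * hsq
        rw [mul_add, h5]
        ring
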